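/- Fix a critical value c and p ∈ (0, 1). If the observed value x satisfies c < x < c + Φ⁻¹(0.5·p + 0.5), then any θ ∈ ℝ with F(x; θ, c) = p satisfies θ < c. (In particular, the upper bound θ(p) of the conditional quantile falls below the critical value whenever the observed t-statistic exceeds c by less than Φ⁻¹(0.5p + 0.5).) -/

import Mathlib

open Filter Set

/-- The standard normal CDF `Φ(t) = (2π)^{−1/2} ∫_{−∞}^t exp(−s²/2) ds`. -/
noncomputable def Phi (t : ℝ) : ℝ :=
  (Real.sqrt (2 * Real.pi))⁻¹ * ∫ s in Set.Iic t, Real.exp (-(s ^ 2) / 2)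

/-- The truncated-normal distribution function
    `F(a; θ, c) := (Φ(a − θ) − Φ(c − θ)) / (1 − Φ(c − θ))`. -/
noncomputable def F (a θ c : ℝ) : ℝ :=
  (Phi (a - θ) - Phi (c - θ)) / (1 - Phi (c - θ))

/-- The inverse of the standard normal CDF on `(0,1)`. -/
noncomputable def PhiInv : ℝ → ℝ := Function.invFun Phi

section Aux
open MeasureTheory Real

noncomputable def g (s : ℝ) : ℝ := Real.exp (-(s ^ 2) / 2)

lemma g_eq (s : ℝ) : g s = Real.exp (-(1/2 : ℝ) * s ^ 2) := by unfold g; ring_nf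

lemma g_pos (s : ℝ) : 0 < g s := Real.exp_pos _

lemma g_cont : Continuous g := by unfold g; continuity

lemma g_integrable : Integrable g := by
  simp only [funext g_eq]
  exact integrable_exp_neg_mul_sq (by norm_num)

lemma g_integral : ∫ s, g s = Real.sqrt (2 * Real.pi) := by
  simp only [funext g_eq]
  rw [integral_gaussian]
  rw [mul_comm]; norm_num

lemma sqrt2pi_pos : 0 < Real.sqrt (2 * Real.pi) :=
  Real.sqrt_pos.2 (by positivity)

lemma Phi_eq (t : ℝ) : Phi t = (Real.sqrt (2 * Real.pi))⁻¹ * ∫ s in Set.Iic t, g s := rfl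

lemma setInt_pos {s : Set ℝ} (hs : MeasurableSet s) (h : 0 < volume s) :
    0 < ∫ x in s, g x := by
  rw [setIntegral_pos_iff_support_of_nonneg_ae]
  · have : (Function.support g) = Set.univ := by
      ext x; simp [Function.support, (g_pos x).ne']
    rwa [this, Set.univ_inter]
  · exact Eventually.of_forall fun x => (g_pos x).le
  · exact g_integrable.integrableOn

lemma Phi_pos (t : ℝ) : 0 < Phi t := by
  rw [Phi_eq]
  exact mul_pos (inv_pos.2 sqrt2pi_pos) (setInt_pos measurableSet_Iic (by simp))

lemma Phi_lt_one (t : ℝ) : Phi t < 1 := by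
  rw [Phi_eq]
  rw [inv_mul_lt_iff₀ sqrt2pi_pos, mul_one, ← g_integral,
    ← intervalIntegral.integral_Iic_add_Ioi (b := t) g_integrable.integrableOn
      g_integrable.integrableOn]
  have : 0 < ∫ x in Set.Ioi t, g x := setInt_pos measurableSet_Ioi (by simp)
  linarith

lemma Phi_strictMono : StrictMono Phi := by
  intro s t hst
  rw [Phi_eq, Phi_eq]
  have h := intervalIntegral.integral_Iic_sub_Iic (μ := volume) (f := g)
    g_integrable.integrableOn g_integrable.integrableOn (a := s) (b := t)
  have h2 : 0 < ∫ x in s..t, g x := by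
    rw [intervalIntegral.integral_of_le hst.le]
    exact setInt_pos measurableSet_Ioc (by simp [hst])
  have : (∫ x in Set.Iic s, g x) < ∫ x in Set.Iic t, g x := by linarith
  exact mul_lt_mul_of_pos_left this (inv_pos.2 sqrt2pi_pos)

lemma Phi_zero : Phi 0 = 1 / 2 := by
  have hsymm : (∫ s in Set.Iic (0:ℝ), g s) = ∫ s in Set.Ioi (0:ℝ), g s := by
    rw [show (∫ s in Set.Iic (0:ℝ), g s) = ∫ s in Set.Iic (0:ℝ), g (-s) from by
      congr 1; ext s; unfold g; ring_nf]
    rw [integral_comp_neg_Iic (0:ℝ) g, neg_zero]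
  have h := intervalIntegral.integral_Iic_add_Ioi (b := (0:ℝ)) (μ := volume) (f := g)
    g_integrable.integrableOn g_integrable.integrableOn
  rw [g_integral] at h
  rw [hsymm] at h
  rw [Phi_eq, hsymm]
  have h2 : (∫ s in Set.Ioi (0:ℝ), g s) = Real.sqrt (2*Real.pi)/2 := by linarith
  rw [h2]
  field_simp

lemma g_integral_Ioi : ∫ s in Set.Ioi (0:ℝ), g s = Real.sqrt (2 * Real.pi) / 2 := by
  have hsymm : (∫ s in Set.Iic (0:ℝ), g s) = ∫ s in Set.Ioi (0:ℝ), g s := by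
    rw [show (∫ s in Set.Iic (0:ℝ), g s) = ∫ s in Set.Iic (0:ℝ), g (-s) from by
      congr 1; ext s; unfold g; ring_nf]
    rw [integral_comp_neg_Iic (0:ℝ) g, neg_zero]
  have h := intervalIntegral.integral_Iic_add_Ioi (b := (0:ℝ)) (μ := volume) (f := g)
    g_integrable.integrableOn g_integrable.integrableOn
  rw [g_integral, hsymm] at h
  linarith

lemma one_sub_Phi (t : ℝ) : 1 - Phi t
    = (Real.sqrt (2 * Real.pi))⁻¹ * ∫ s in Set.Ioi t, g s := by
  have h := intervalIntegral.integral_Iic_add_Ioi (b := t) (μ := volume) (f := g)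
    g_integrable.integrableOn g_integrable.integrableOn
  rw [g_integral] at h
  rw [Phi_eq]
  have := sqrt2pi_pos
  have hs : Real.sqrt (2*Real.pi) = Real.sqrt 2 * Real.sqrt Real.pi :=
    Real.sqrt_mul (by norm_num) _
  field_simp
  rw [hs] at h
  linarith

lemma translate_Ioi (a : ℝ) :
    (∫ s in Set.Ioi a, g s) = ∫ x in Set.Ioi (0:ℝ), g (x + a) := by
  have A : MeasurableEmbedding (fun x : ℝ => x + a) :=
    (Homeomorph.addRight a).isClosedEmbedding.measurableEmbedding
  have h := A.setIntegral_map (μ := volume) g (Set.Ioi a)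
  rw [map_add_right_eq_self volume a] at h
  rw [h]
  congr 1
  ext x; simp [lt_sub_iff_add_lt']

lemma mills {a : ℝ} (ha : 0 ≤ a) :
    1 - Phi a ≤ 1/2 * Real.exp (-(a^2)/2) := by
  rw [one_sub_Phi, translate_Ioi]
  have hb : (∫ x in Set.Ioi (0:ℝ), g (x + a))
      ≤ ∫ x in Set.Ioi (0:ℝ), Real.exp (-(a^2)/2) * g x := by
    apply setIntegral_mono_on
    · exact (g_integrable.comp_add_right a).integrableOn
    · exact (g_integrable.const_mul _).integrableOn
    · exact measurableSet_Ioi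
    · intro x hx
      unfold g
      rw [← Real.exp_add]
      apply Real.exp_le_exp.2
      have : 0 ≤ x := le_of_lt hx
      nlinarith
  rw [integral_const_mul, g_integral_Ioi] at hb
  have h2 := mul_le_mul_of_nonneg_left hb (inv_nonneg.2 sqrt2pi_pos.le)
  refine h2.trans_eq ?_
  field_simp

lemma Phi_sub_Phi (s t : ℝ) :
    Phi t - Phi s = (Real.sqrt (2 * Real.pi))⁻¹ * ∫ x in s..t, g x := by
  rw [Phi_eq, Phi_eq, ← mul_sub,
    intervalIntegral.integral_Iic_sub_Iic g_integrable.integrableOn g_integrable.integrableOn]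

lemma Phi_hasDerivAt (t : ℝ) :
    HasDerivAt Phi ((Real.sqrt (2 * Real.pi))⁻¹ * g t) t := by
  have key : ∀ u : ℝ, Phi u = Phi 0 + (Real.sqrt (2 * Real.pi))⁻¹ * ∫ x in (0:ℝ)..u, g x := by
    intro u
    have := Phi_sub_Phi 0 u
    linarith
  rw [funext key]
  have hint : HasDerivAt (fun u : ℝ => ∫ x in (0:ℝ)..u, g x) (g t) t := by
    apply intervalIntegral.integral_hasDerivAt_right
      (g_cont.intervalIntegrable _ _)
      (g_cont.aestronglyMeasurable.stronglyMeasurableAtFilter)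
      g_cont.continuousAt
  exact ((hint.const_mul _).const_add _)

lemma Phi_cont : Continuous Phi :=
  continuous_iff_continuousAt.2 fun t => (Phi_hasDerivAt t).continuousAt

lemma Phi_nonneg_half {a : ℝ} (ha : 0 ≤ a) : 1/2 ≤ Phi a := by
  rw [← Phi_zero]; exact Phi_strictMono.monotone ha

lemma Phi_exists_eq {y : ℝ} (hy : y ∈ Set.Ioo (1/2 : ℝ) 1) : ∃ t, Phi t = y := by
  obtain ⟨hy1, hy2⟩ := hy
  -- find T with Phi T > y
  have htend : Tendsto (fun T : ℝ => Real.exp (-(T^2)/2)) atTop (nhds 0) := by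
    apply Real.tendsto_exp_atBot.comp
    apply Tendsto.atBot_div_const (by norm_num : (0:ℝ) < 2)
    exact tendsto_neg_atBot_iff.2 (tendsto_pow_atTop (by norm_num : 2 ≠ 0))
  obtain ⟨T, hT1, hT2⟩ :=
    ((htend.eventually_lt_const (by linarith : (0:ℝ) < 2 * (1 - y))).and
      (eventually_ge_atTop (0:ℝ))).exists
  have hPT : y < Phi T := by
    have := mills hT2
    linarith
  have := intermediate_value_Icc hT2 Phi_cont.continuousOn
    (show y ∈ Set.Icc (Phi 0) (Phi T) from ⟨by rw [Phi_zero]; linarith, hPT.le⟩)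
  obtain ⟨t, _, ht⟩ := this
  exact ⟨t, ht⟩

lemma key {a : ℝ} (ha : 0 < a) {u : ℝ} (hu : u ≤ 0) :
    Phi (u + a) - Phi u ≤ (2 * Phi a - 1) * (1 - Phi u) := by
  set c := (Real.sqrt (2 * Real.pi))⁻¹ with hc
  have hcpos : 0 < c := inv_pos.2 sqrt2pi_pos
  set h : ℝ → ℝ := fun u => (2 * Phi a - 1) * (1 - Phi u) - (Phi (u + a) - Phi u) with hh
  have hderiv : ∀ v : ℝ, HasDerivAt h
      ((2 - 2 * Phi a) * (c * g v) - c * g (v + a)) v := by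
    intro v
    have h1 : HasDerivAt Phi (c * g v) v := Phi_hasDerivAt v
    have h2 : HasDerivAt (fun w : ℝ => Phi (w + a)) (c * g (v + a)) v := by
      have h2' := (Phi_hasDerivAt (v + a)).comp v ((hasDerivAt_id v).add_const a)
      simp only [Function.comp, mul_one] at h2'
      exact h2' 
    have := (((h1.const_sub 1).const_mul (2 * Phi a - 1)).sub (h2.sub h1))
    refine this.congr_deriv ?_
    ring
  have hmain : ∀ v ∈ Set.Iio (0:ℝ), deriv h v ≤ 0 := by
    intro v hv
    rw [(hderiv v).deriv]
    have hglt : (2 - 2 * Phi a) * g v ≤ g (v + a) := by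
      have hPa : 1/2 ≤ Phi a := Phi_nonneg_half ha.le
      rcases le_or_gt v (-(a/2)) with hcase | hcase
      · have hg : g v ≤ g (v + a) := by
          unfold g
          apply Real.exp_le_exp.2
          nlinarith
        nlinarith [g_pos v, g_pos (v + a), Phi_lt_one a]
      · have hm := mills ha.le
        have hge : Real.exp (-(a^2)/2) * g v ≤ g (v + a) := by
          unfold g
          rw [← Real.exp_add]
          apply Real.exp_le_exp.2
          have hv0 : v ≤ 0 := le_of_lt hv
          nlinarith
        nlinarith [g_pos v]
    nlinarith [g_pos v, g_pos (v + a)]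
  have hanti : AntitoneOn h (Set.Iic 0) := by
    apply antitoneOn_of_deriv_nonpos (convex_Iic 0)
    · exact ((continuous_const.mul (continuous_const.sub Phi_cont)).sub
        ((Phi_cont.comp (continuous_id.add continuous_const)).sub Phi_cont)).continuousOn
    · intro v hv
      exact (hderiv v).differentiableAt.differentiableWithinAt
    · rw [interior_Iic]; exact hmain
  have h0 : h 0 = 0 := by
    simp only [hh, zero_add, Phi_zero]
    ring
  have := hanti hu (le_refl (0:ℝ)) hu
  rw [h0] at this
  simp only [hh] at this
  linarith

end Aux

/-- Fix `c` and `p ∈ (0,1)`. If `c < x < c + Φ⁻¹(0.5·p + 0.5)`, then any `θ` with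
`F(x; θ, c) = p` satisfies `θ < c`. -/
theorem stmt_9 (c p x θ : ℝ) (hp : p ∈ Set.Ioo (0 : ℝ) 1)
    (hx₁ : c < x) (hx₂ : x < c + PhiInv (0.5 * p + 0.5))
    (hθ : F x θ c = p) : θ < c := by
  obtain ⟨hp0, hp1⟩ := hp
  have hq : (0.5 * p + 0.5 : ℝ) ∈ Set.Ioo (1/2 : ℝ) 1 := by
    constructor <;> [linarith; linarith]
  obtain ⟨t, ht⟩ := Phi_exists_eq hq
  have hinv : Phi (PhiInv (0.5 * p + 0.5)) = 0.5 * p + 0.5 := by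
    rw [PhiInv, Function.invFun_eq ⟨t, ht⟩]
  by_contra hcon
  push_neg at hcon
  have hu : c - θ ≤ 0 := by linarith
  have ha : 0 < x - c := by linarith
  have hΦ : Phi (x - c) < 0.5 * p + 0.5 := by
    rw [← hinv]; exact Phi_strictMono (by linarith)
  have hden : 0 < 1 - Phi (c - θ) := by linarith [Phi_lt_one (c - θ)]
  have hxθ : x - θ = (c - θ) + (x - c) := by ring
  have hF : Phi ((c - θ) + (x - c)) - Phi (c - θ) = p * (1 - Phi (c - θ)) := by
    unfold F at hθ
    rw [div_eq_iff hden.ne'] at hθ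
    rw [← hxθ]
    linarith
  have hk := key ha hu
  rw [hF] at hk
  nlinarith [hden, hΦ, hk]
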